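/- Let g_0 be the ad x-eigenspace of eigenvalue 0, g_{1/2} that of eigenvalue 1/2, and f ∈ g_{-1} with [x,f] = -f, in a Lie algebra g with invariant symmetric form. Define ⟨a,b⟩ = (f|[a,b]) on g_{1/2}. If v ∈ g_0 satisfies [v,f] = 0, then for all a, b ∈ g_{1/2}: ⟨[v,a], b⟩ = ⟨[v,b], a⟩. -/
import Mathlib


/-- For v ∈ g₀ with [v,f] = 0 and a,b ∈ g_{1/2}:
⟨[v,a],b⟩ = ⟨[v,b],a⟩ where ⟨a,b⟩ = (f|[a,b]). -/
theorem stmt_4 {g : Type*} [LieRing g] [LieAlgebra ℂ g]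
    (B : g →ₗ[ℂ] g →ₗ[ℂ] ℂ)
    (hsymm : ∀ a b, B a b = B b a)
    (hinv : ∀ a b c, B ⁅a, b⁆ c = B a ⁅b, c⁆)
    (x f : g) (hxf : ⁅x, f⁆ = -f)
    (v : g) (hv0 : v ∈ Module.End.eigenspace (LieAlgebra.ad ℂ g x) (0 : ℂ))
    (hvf : ⁅v, f⁆ = 0)
    (a b : g)
    (ha : a ∈ Module.End.eigenspace (LieAlgebra.ad ℂ g x) (1/2 : ℂ))
    (hb : b ∈ Module.End.eigenspace (LieAlgebra.ad ℂ g x) (1/2 : ℂ)) :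
    B f ⁅⁅v, a⁆, b⁆ = B f ⁅⁅v, b⁆, a⁆ := by
  have hfv : ⁅f, v⁆ = 0 := by rw [← lie_skew, hvf, neg_zero]
  have key : ∀ c d : g, B f ⁅⁅v, c⁆, d⁆ = B v ⁅⁅f, c⁆, d⁆ := by
    intro c d
    rw [← hinv f ⁅v, c⁆ d, leibniz_lie f v c, hfv, zero_lie, zero_add, hinv]
  rw [key a b, key b a]
  have jac : ⁅⁅f, a⁆, b⁆ = ⁅f, ⁅a, b⁆⁆ + ⁅⁅f, b⁆, a⁆ := by
    rw [leibniz_lie f a b, ← lie_skew a ⁅f, b⁆]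
    abel
  rw [jac, map_add, ← hinv v f ⁅a, b⁆, hvf]
  simp
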